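/- The flag f̄-vector of an Eulerian quasi-graded poset of rank n+1 satisfies the generalized Dehn–Sommerville relations: for any S ⊆ {1,…,n} and any i, k ∈ S ∪ {0, n+1} with i < k and S ∩ {i+1,…,k−1} = ∅, one has ∑_{j=i}^{k} (−1)^j · f̄_{S ∪ {j}} = 0 (with the conventions f̄_{S∪{0}} = f̄_{S∪{n+1}} = f̄_S). -/
import Mathlib


open scoped Classical
open Finset

noncomputable section

/-- The free noncommutative algebra `ℚ⟨a,b⟩`. -/
abbrev QA : Type := FreeAlgebra ℚ Bool

/-- The variable `a`. -/
def av : QA := FreeAlgebra.ι ℚ true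

/-- The variable `b`. -/
def bv : QA := FreeAlgebra.ι ℚ false

/-- `c = a + b`. -/
def cvar : QA := av + bv

/-- `d = ab + ba`. -/
def dvar : QA := av * bv + bv * av

variable {α : Type*}

/-- The `ζ̄`-weight of a chain encoded as `f : Fin (k+1) → α`:
the product of the values of `ζ̄` on consecutive elements. -/
def chainZeta (ζ : α → α → ℚ) {k : ℕ} (f : Fin (k + 1) → α) : ℚ :=
  (List.ofFn (fun i : Fin k => ζ (f i.castSucc) (f i.succ))).prod

/-- The `ab`-weight of a chain: `(a-b)^{g₁-1} · b · (a-b)^{g₂-1} · b ⋯ b · (a-b)^{g_k-1}`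
where `gᵢ` are the successive rank gaps along the chain. -/
def chainWt (ρ : α → ℕ) {k : ℕ} (f : Fin (k + 1) → α) : QA :=
  (List.ofFn (fun i : Fin k =>
    (if (i : ℕ) = 0 then 1 else bv) *
      (av - bv) ^ (ρ (f i.succ) - ρ (f i.castSucc) - 1))).prod

/-- `f` encodes a (strict) chain from `x` to `z`. -/
def IsChainFrom [PartialOrder α] {k : ℕ} (f : Fin (k + 1) → α) (x z : α) : Prop :=
  StrictMono f ∧ f 0 = x ∧ f (Fin.last k) = z

/-- The ab-index `Ψ` of the interval `[x,z]` of a quasi-graded poset: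
the sum over all chains from `x` to `z` of `ζ̄(c) · wt(c)`. -/
def abIndex [PartialOrder α] [Fintype α] (ρ : α → ℕ) (ζ : α → α → ℚ) (x z : α) : QA :=
  ∑ k ∈ Finset.range (Fintype.card α), ∑ f : Fin (k + 1) → α,
    if IsChainFrom f x z then chainZeta ζ f • chainWt ρ f else 0

/-- `(P,ρ,ζ̄)` is a quasi-graded poset: `ρ` is strictly order-preserving and `ζ̄`
is an element of the incidence algebra with `ζ̄(x,x) = 1`. -/
def IsQuasiGraded [PartialOrder α] (ρ : α → ℕ) (ζ : α → α → ℚ) : Prop :=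
  StrictMono ρ ∧ (∀ x, ζ x x = 1) ∧ ∀ x y : α, ¬ x ≤ y → ζ x y = 0

/-- Convolution in the incidence algebra. -/
def iaMul [PartialOrder α] [Fintype α] (f g : α → α → ℚ) : α → α → ℚ :=
  fun x z => ∑ y ∈ Finset.univ.filter (fun y => x ≤ y ∧ y ≤ z), f x y * g y z

/-- The identity `δ` of the incidence algebra. -/
def iaDelta : α → α → ℚ := fun x z => if x = z then 1 else 0

/-- The Eulerian condition on the interval `[x,z]`:
`∑_{x ≤ y ≤ z} (-1)^{ρ(y)-ρ(x)} ζ̄(x,y) ζ̄(y,z) = δ_{x,z}`. -/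
def EulerianAt [PartialOrder α] [Fintype α] (ρ : α → ℕ) (ζ : α → α → ℚ) (x z : α) : Prop :=
  (∑ y ∈ Finset.univ.filter (fun y => x ≤ y ∧ y ≤ z),
    (-1 : ℚ) ^ (ρ y - ρ x) * ζ x y * ζ y z) = iaDelta x z

/-- `(P,ρ,ζ̄)` is Eulerian. -/
def IsEulerian [PartialOrder α] [Fintype α] (ρ : α → ℕ) (ζ : α → α → ℚ) : Prop :=
  ∀ x z : α, x ≤ z → EulerianAt ρ ζ x z

/-- The flag `f̄`-vector: `f̄_S = ∑_c ζ̄(c)` over chains from `x` to `z`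
whose interior elements have ranks exactly `S`. -/
def flagF [PartialOrder α] [Fintype α] (ρ : α → ℕ) (ζ : α → α → ℚ)
    (x z : α) (S : Finset ℕ) : ℚ :=
  ∑ k ∈ Finset.range (Fintype.card α), ∑ f : Fin (k + 1) → α,
    if IsChainFrom f x z ∧
        (Finset.univ.filter (fun i : Fin (k + 1) => i ≠ 0 ∧ i ≠ Fin.last k)).image
          (fun i => ρ (f i)) = S
      then chainZeta ζ f else 0

/-- The flag `h̄`-vector: `h̄_S = ∑_{T ⊆ S} (-1)^{|S-T|} f̄_T`. -/
def flagH [PartialOrder α] [Fintype α] (ρ : α → ℕ) (ζ : α → α → ℚ)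
    (x z : α) (S : Finset ℕ) : ℚ :=
  ∑ T ∈ S.powerset, (-1 : ℚ) ^ (S.card - T.card) * flagF ρ ζ x z T

/-- Chains with respect to an explicit strict relation `lt`. -/
def IsChainFromRel (lt : α → α → Prop) {k : ℕ} (f : Fin (k + 1) → α) (x z : α) : Prop :=
  (∀ i j : Fin (k + 1), i < j → lt (f i) (f j)) ∧ f 0 = x ∧ f (Fin.last k) = z

/-- The ab-index with respect to an explicit strict order relation `lt`. -/
def abIndexRel [Fintype α] (lt : α → α → Prop) (ρ : α → ℕ) (ζ : α → α → ℚ)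
    (x z : α) : QA :=
  ∑ k ∈ Finset.range (Fintype.card α), ∑ f : Fin (k + 1) → α,
    if IsChainFromRel lt f x z then chainZeta ζ f • chainWt ρ f else 0

/-- The Eulerian condition with respect to an explicit order relation `le`. -/
def IsEulerianRel [Fintype α] (le : α → α → Prop) (ρ : α → ℕ) (ζ : α → α → ℚ) : Prop :=
  ∀ x z : α, le x z →
    (∑ y ∈ Finset.univ.filter (fun y => le x y ∧ le y z),
      (-1 : ℚ) ^ (ρ y - ρ x) * ζ x y * ζ y z) = (if x = z then (1 : ℚ) else 0)

/-- Carrier of the zipped poset: remove `x` and `y`; the element `z` plays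
the role of the new element `w`. -/
abbrev ZipCarrier (α : Type*) (x y : α) : Type _ := {u : α // u ≠ x ∧ u ≠ y}

/-- The strict order of the zipped poset: `u <_Q w` iff `u < x` or `u < y`,
`w <_Q v` iff `x < v`, and otherwise the order is inherited from `P`. -/
def zipLt [PartialOrder α] (x y z : α) : ZipCarrier α x y → ZipCarrier α x y → Prop :=
  fun u v =>
    if u.1 = z then v.1 ≠ z ∧ x < v.1
    else if v.1 = z then u.1 < x ∨ u.1 < y
    else u.1 < v.1

/-- The (non-strict) order of the zipped poset. -/
def zipLe [PartialOrder α] (x y z : α) : ZipCarrier α x y → ZipCarrier α x y → Prop :=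
  fun u v => zipLt x y z u v ∨ u = v

/-- The rank function of the zipped poset: `ρ_Q(w) = ρ(x)`, otherwise inherited. -/
def zipRank [PartialOrder α] (ρ : α → ℕ) (x y z : α) : ZipCarrier α x y → ℕ :=
  fun u => if u.1 = z then ρ x else ρ u.1

/-- The weighted zeta function of the zipped poset:
`ζ̄_Q(w,v) = ζ̄(x,v)`, `ζ̄_Q(u,w) = ζ̄(u,x) + ζ̄(u,y) - ζ̄(u,z)`, otherwise inherited. -/
def zipZeta [PartialOrder α] (ζ : α → α → ℚ) (x y z : α) :
    ZipCarrier α x y → ZipCarrier α x y → ℚ :=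
  fun u v =>
    if v.1 = z then (if u.1 = z then 1 else ζ u.1 x + ζ u.1 y - ζ u.1 z)
    else if u.1 = z then ζ x v.1
    else ζ u.1 v.1

set_option linter.unusedSectionVars false
section DS
variable {α : Type*} [Fintype α] [PartialOrder α]

/-- Interior rank image of a chain. -/
def imgInt (ρ : α → ℕ) {k : ℕ} (f : Fin (k + 1) → α) : Finset ℕ :=
  (Finset.univ.filter (fun i : Fin (k + 1) => i ≠ 0 ∧ i ≠ Fin.last k)).image (fun i => ρ (f i))

def chainTerm (ρ : α → ℕ) (ζ : α → α → ℚ) (x z : α) (T : Finset ℕ) (k : ℕ) : ℚ :=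
  ∑ f : Fin (k + 1) → α, if IsChainFrom f x z ∧ imgInt ρ f = T then chainZeta ζ f else 0

lemma flagF_eq_sum (ρ : α → ℕ) (ζ : α → α → ℚ) (x z : α) (T : Finset ℕ) :
    flagF ρ ζ x z T = ∑ k ∈ Finset.range (Fintype.card α), chainTerm ρ ζ x z T k := rfl

lemma chainTerm_eq_zero (ρ : α → ℕ) (ζ : α → α → ℚ) (x z : α) (T : Finset ℕ) {k : ℕ}
    (hk : Fintype.card α ≤ k) : chainTerm ρ ζ x z T k = 0 := by
  refine Finset.sum_eq_zero fun f _ => ?_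
  rw [if_neg]
  rintro ⟨⟨hmono, -, -⟩, -⟩
  have := Fintype.card_le_of_injective f hmono.injective
  simp only [Fintype.card_fin] at this
  omega

lemma flagF_eq_sum' (ρ : α → ℕ) (ζ : α → α → ℚ) (x z : α) (T : Finset ℕ) {M : ℕ}
    (hM : Fintype.card α ≤ M) :
    flagF ρ ζ x z T = ∑ k ∈ Finset.range M, chainTerm ρ ζ x z T k := by
  rw [flagF_eq_sum]
  exact Finset.sum_subset (Finset.range_subset_range.2 hM)
    (fun k _ hk => chainTerm_eq_zero _ _ _ _ _ (by simp only [Finset.mem_range, not_lt] at hk; exact hk))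

lemma chainZeta_cons (ζ : α → α → ℚ) {k : ℕ} (x : α) (g : Fin (k + 1) → α) :
    chainZeta ζ (Fin.cons x g : Fin (k + 2) → α) = ζ x (g 0) * chainZeta ζ g := by
  unfold chainZeta
  rw [List.ofFn_succ, List.prod_cons]
  simp only [← Fin.succ_castSucc, Fin.cons_succ, Fin.castSucc_zero, Fin.cons_zero]

lemma strictMono_cons_iff {k : ℕ} {x : α} {g : Fin (k + 1) → α} :
    StrictMono (Fin.cons x g : Fin (k + 2) → α) ↔ x < g 0 ∧ StrictMono g := by
  rw [Fin.strictMono_iff_lt_succ, Fin.strictMono_iff_lt_succ]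
  constructor
  · intro h
    constructor
    · have := h 0
      simpa using this
    · intro i
      have := h i.succ
      rwa [← Fin.succ_castSucc, Fin.cons_succ, Fin.cons_succ] at this
  · rintro ⟨h0, h⟩ i
    induction i using Fin.cases with
    | zero => simpa using h0
    | succ i => rw [← Fin.succ_castSucc, Fin.cons_succ, Fin.cons_succ]; exact h i
end DS
section DS2
variable {α : Type*} [Fintype α] [PartialOrder α] {ρ : α → ℕ} {ζ : α → α → ℚ}

lemma filter_interior_succ (k : ℕ) :
    (Finset.univ.filter (fun i : Fin (k + 2) => i ≠ 0 ∧ i ≠ Fin.last (k + 1))) =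
      (Finset.univ.filter (fun i : Fin (k + 1) => i ≠ Fin.last k)).image Fin.succ := by
  ext i
  simp only [Finset.mem_filter, Finset.mem_image, Finset.mem_univ, true_and]
  constructor
  · rintro ⟨h0, hl⟩
    refine ⟨i.pred h0, ?_, Fin.succ_pred i h0⟩
    intro h
    apply hl
    rw [← Fin.succ_pred i h0, h, Fin.succ_last]
  · rintro ⟨j, hj, rfl⟩
    exact ⟨Fin.succ_ne_zero j, fun h => hj (by
      rwa [← Fin.succ_last, Fin.succ_inj] at h)⟩

lemma imgInt_cons (ρ : α → ℕ) {k : ℕ} (x : α) (g : Fin (k + 1) → α) :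
    imgInt ρ (Fin.cons x g : Fin (k + 2) → α) =
      (Finset.univ.filter (fun i : Fin (k + 1) => i ≠ Fin.last k)).image (fun i => ρ (g i)) := by
  unfold imgInt
  rw [filter_interior_succ, Finset.image_image]
  refine Finset.image_congr fun i _ => ?_
  simp only [Function.comp_apply, Fin.cons_succ]

lemma imgInt_cons_zero (ρ : α → ℕ) (x : α) (g : Fin 1 → α) :
    imgInt ρ (Fin.cons x g : Fin 2 → α) = ∅ := by
  rw [imgInt_cons]
  have : (Finset.univ.filter (fun i : Fin 1 => i ≠ Fin.last 0)) = ∅ := by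
    ext i
    simp only [Finset.mem_filter, Finset.mem_univ, true_and, Finset.notMem_empty, iff_false]
    intro h
    exact h (Subsingleton.elim i (Fin.last 0))
  rw [this, Finset.image_empty]

lemma imgInt_cons_pos (ρ : α → ℕ) {k : ℕ} (x : α) (g : Fin (k + 2) → α) :
    imgInt ρ (Fin.cons x g : Fin (k + 3) → α) = insert (ρ (g 0)) (imgInt ρ g) := by
  rw [imgInt_cons]
  have h : (Finset.univ.filter (fun i : Fin (k + 2) => i ≠ Fin.last (k + 1))) =
      insert 0 (Finset.univ.filter (fun i : Fin (k + 2) => i ≠ 0 ∧ i ≠ Fin.last (k + 1))) := by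
    ext i
    simp only [Finset.mem_filter, Finset.mem_insert, Finset.mem_univ, true_and]
    constructor
    · intro h
      by_cases h0 : i = 0
      · exact Or.inl h0
      · exact Or.inr ⟨h0, h⟩
    · rintro (rfl | ⟨-, h⟩)
      · intro h
        have := congrArg Fin.val h
        simp at this
      · exact h
  rw [h, Finset.image_insert]
  rfl

lemma cons_cond_iff (hρ : StrictMono ρ) {k : ℕ} {x w : α} {T : Finset ℕ} {r : ℕ}
    (hrT : r ∈ T) (hmin : ∀ t ∈ T, r ≤ t) (hrw : r < ρ w) (g : Fin (k + 1) → α) :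
    (IsChainFrom (Fin.cons x g : Fin (k + 2) → α) x w ∧
        imgInt ρ (Fin.cons x g : Fin (k + 2) → α) = T)
      ↔ ρ (g 0) = r ∧ x < g 0 ∧ StrictMono g ∧ g (Fin.last k) = w ∧
          imgInt ρ g = T.erase r := by
  have hlast : (Fin.cons x g : Fin (k + 2) → α) (Fin.last (k + 1)) = g (Fin.last k) := by
    rw [← Fin.succ_last, Fin.cons_succ]
  cases k with
  | zero =>
    constructor
    · rintro ⟨-, himg⟩
      rw [imgInt_cons_zero] at himg
      exact absurd (himg ▸ hrT) (Finset.notMem_empty r)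
    · rintro ⟨hr, -, -, hw, -⟩
      exfalso
      have : g 0 = w := hw
      rw [this] at hr
      omega
  | succ k =>
    rw [imgInt_cons_pos]
    constructor
    · rintro ⟨⟨hsm, -, hl⟩, himg⟩
      obtain ⟨hx0, hg⟩ := strictMono_cons_iff.1 hsm
      have hmem : ∀ t ∈ imgInt ρ g, ρ (g 0) < t := by
        intro t ht
        obtain ⟨i, hi, rfl⟩ := Finset.mem_image.1 ht
        simp only [Finset.mem_filter] at hi
        exact hρ (hg (Fin.pos_of_ne_zero hi.2.1))
      have hne : ρ (g 0) ∉ imgInt ρ g := fun h => lt_irrefl _ (hmem _ h)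
      have hr : ρ (g 0) = r := by
        have h1 : r ≤ ρ (g 0) := hmin _ (himg ▸ Finset.mem_insert_self _ _)
        rcases Finset.mem_insert.1 (himg ▸ hrT) with h | h
        · omega
        · have := hmem _ h; omega
      subst hr
      refine ⟨rfl, hx0, hg, by rwa [hlast] at hl, ?_⟩
      rw [← himg, Finset.erase_insert hne]
    · rintro ⟨hr, hx0, hg, hw, himg⟩
      refine ⟨⟨strictMono_cons_iff.2 ⟨hx0, hg⟩, Fin.cons_zero _ _, by rwa [hlast]⟩, ?_⟩
      rw [himg, hr, Finset.insert_erase hrT]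
end DS2
section DS3
variable {α : Type*} [Fintype α] [PartialOrder α] {ρ : α → ℕ} {ζ : α → α → ℚ}

lemma chainTerm_succ (hq : IsQuasiGraded ρ ζ) (x w : α) (T : Finset ℕ) (r : ℕ)
    (hrT : r ∈ T) (hmin : ∀ t ∈ T, r ≤ t) (hxr : ρ x < r) (hrw : r < ρ w) (k : ℕ) :
    chainTerm ρ ζ x w T (k + 1) =
      ∑ y ∈ Finset.univ.filter (fun y => ρ y = r),
        ζ x y * chainTerm ρ ζ y w (T.erase r) k := by
  obtain ⟨hρ, hζd, hζ0⟩ := hq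
  have key : ∀ g : Fin (k + 1) → α,
      (if IsChainFrom (Fin.cons x g : Fin (k + 2) → α) x w ∧
          imgInt ρ (Fin.cons x g : Fin (k + 2) → α) = T
        then chainZeta ζ (Fin.cons x g : Fin (k + 2) → α) else 0)
      = ∑ y ∈ Finset.univ.filter (fun y => ρ y = r),
          ζ x y * (if IsChainFrom g y w ∧ imgInt ρ g = T.erase r
            then chainZeta ζ g else 0) := by
    intro g
    by_cases hg0 : ρ (g 0) = r
    · rw [Finset.sum_eq_single (g 0)]
      · by_cases hc : StrictMono g ∧ g (Fin.last k) = w ∧ imgInt ρ g = T.erase r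
        · have hif : (if IsChainFrom g (g 0) w ∧ imgInt ρ g = T.erase r
              then chainZeta ζ g else 0) = chainZeta ζ g :=
            if_pos ⟨⟨hc.1, rfl, hc.2.1⟩, hc.2.2⟩
          by_cases hx0 : x < g 0
          · rw [if_pos ((cons_cond_iff hρ hrT hmin hrw g).2
              ⟨hg0, hx0, hc.1, hc.2.1, hc.2.2⟩), hif, chainZeta_cons]
          · rw [if_neg (fun hC => hx0 ((cons_cond_iff hρ hrT hmin hrw g).1 hC).2.1), hif]
            have hz : ζ x (g 0) = 0 := by
              apply hζ0
              intro hle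
              exact hx0 (lt_of_le_of_ne hle (fun e => by rw [← e] at hg0; omega))
            rw [hz, zero_mul]
        · rw [if_neg, if_neg, mul_zero]
          · rintro ⟨⟨h1, -, h2⟩, h3⟩
            exact hc ⟨h1, h2, h3⟩
          · intro hC
            obtain ⟨-, -, h1, h2, h3⟩ := (cons_cond_iff hρ hrT hmin hrw g).1 hC
            exact hc ⟨h1, h2, h3⟩
      · intro y _ hy
        rw [if_neg, mul_zero]
        rintro ⟨⟨-, h0, -⟩, -⟩
        exact hy (h0 ▸ rfl)
      · intro h
        simp only [Finset.mem_filter, Finset.mem_univ, true_and] at h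
        exact absurd hg0 h
    · rw [if_neg (fun hC => hg0 ((cons_cond_iff hρ hrT hmin hrw g).1 hC).1)]
      refine (Finset.sum_eq_zero fun y hy => ?_).symm
      rw [if_neg, mul_zero]
      rintro ⟨⟨-, h0, -⟩, -⟩
      rw [← h0] at hy
      simp only [Finset.mem_filter] at hy
      exact hg0 hy.2
  have e := Fin.consEquiv (fun _ : Fin (k + 2) => α)
  calc chainTerm ρ ζ x w T (k + 1)
      = ∑ p : α × (Fin (k + 1) → α),
          (if IsChainFrom (Fin.cons p.1 p.2 : Fin (k + 2) → α) x w ∧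
              imgInt ρ (Fin.cons p.1 p.2 : Fin (k + 2) → α) = T
            then chainZeta ζ (Fin.cons p.1 p.2 : Fin (k + 2) → α) else 0) := by
        rw [chainTerm]
        exact (Equiv.sum_comp (Fin.consEquiv (fun _ : Fin (k + 2) => α))
          (fun f => if IsChainFrom f x w ∧ imgInt ρ f = T then chainZeta ζ f else 0)).symm
    _ = ∑ a : α, ∑ g : Fin (k + 1) → α,
          (if IsChainFrom (Fin.cons a g : Fin (k + 2) → α) x w ∧
              imgInt ρ (Fin.cons a g : Fin (k + 2) → α) = T
            then chainZeta ζ (Fin.cons a g : Fin (k + 2) → α) else 0) := by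
        rw [Fintype.sum_prod_type]
    _ = ∑ g : Fin (k + 1) → α,
          (if IsChainFrom (Fin.cons x g : Fin (k + 2) → α) x w ∧
              imgInt ρ (Fin.cons x g : Fin (k + 2) → α) = T
            then chainZeta ζ (Fin.cons x g : Fin (k + 2) → α) else 0) := by
        refine Finset.sum_eq_single x (fun a _ ha => ?_) (fun h => absurd (Finset.mem_univ x) h)
        refine Finset.sum_eq_zero fun g _ => if_neg ?_
        rintro ⟨⟨-, h0, -⟩, -⟩
        rw [Fin.cons_zero] at h0
        exact ha h0
    _ = ∑ g : Fin (k + 1) → α, ∑ y ∈ Finset.univ.filter (fun y => ρ y = r),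
          ζ x y * (if IsChainFrom g y w ∧ imgInt ρ g = T.erase r
            then chainZeta ζ g else 0) := Finset.sum_congr rfl fun g _ => key g
    _ = ∑ y ∈ Finset.univ.filter (fun y => ρ y = r),
        ζ x y * chainTerm ρ ζ y w (T.erase r) k := by
        rw [Finset.sum_comm]
        refine Finset.sum_congr rfl fun y _ => ?_
        rw [chainTerm, Finset.mul_sum]

lemma flagF_peel (hq : IsQuasiGraded ρ ζ) (x w : α) (T : Finset ℕ) (r : ℕ)
    (hrT : r ∈ T) (hmin : ∀ t ∈ T, r ≤ t) (hxr : ρ x < r) (hrw : r < ρ w) :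
    flagF ρ ζ x w T =
      ∑ y ∈ Finset.univ.filter (fun y => ρ y = r), ζ x y * flagF ρ ζ y w (T.erase r) := by
  rw [flagF_eq_sum' ρ ζ x w T (Nat.le_succ _), Finset.sum_range_succ']
  have h0 : chainTerm ρ ζ x w T 0 = 0 := by
    refine Finset.sum_eq_zero fun f _ => if_neg ?_
    rintro ⟨-, himg⟩
    have hempty : imgInt ρ f = ∅ := by
      unfold imgInt
      have : (Finset.univ.filter (fun i : Fin 1 => i ≠ 0 ∧ i ≠ Fin.last 0)) = ∅ := by
        ext i
        simp only [Finset.mem_filter, Finset.mem_univ, true_and, Finset.notMem_empty,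
          iff_false, not_and]
        intro h
        exact absurd (Subsingleton.elim i 0) h
      rw [this, Finset.image_empty]
    rw [hempty] at himg
    exact absurd (himg ▸ hrT) (Finset.notMem_empty r)
  rw [h0, add_zero]
  rw [Finset.sum_congr rfl (fun k _ => chainTerm_succ hq x w T r hrT hmin hxr hrw k),
    Finset.sum_comm]
  refine Finset.sum_congr rfl fun y _ => ?_
  rw [flagF_eq_sum, Finset.mul_sum]
end DS3
section DS4
variable {α : Type*} [Fintype α] [PartialOrder α] {ρ : α → ℕ} {ζ : α → α → ℚ}

lemma imgInt_one (ρ : α → ℕ) (f : Fin 2 → α) : imgInt ρ f = ∅ := by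
  unfold imgInt
  have : (Finset.univ.filter (fun i : Fin 2 => i ≠ 0 ∧ i ≠ Fin.last 1)) = ∅ := by
    ext i
    fin_cases i <;> simp <;> rfl
  rw [this, Finset.image_empty]

lemma imgInt_zero (ρ : α → ℕ) (f : Fin 1 → α) : imgInt ρ f = ∅ := by
  unfold imgInt
  have : (Finset.univ.filter (fun i : Fin 1 => i ≠ 0 ∧ i ≠ Fin.last 0)) = ∅ := by
    ext i
    simp only [Finset.mem_filter, Finset.mem_univ, true_and, Finset.notMem_empty,
      iff_false, not_and]
    intro h
    exact absurd (Subsingleton.elim i 0) h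
  rw [this, Finset.image_empty]

lemma chainTerm_empty_zero (ρ : α → ℕ) (ζ : α → α → ℚ) {x w : α} (hxw : x ≠ w) :
    chainTerm ρ ζ x w ∅ 0 = 0 := by
  refine Finset.sum_eq_zero fun f _ => if_neg ?_
  rintro ⟨⟨-, h0, hl⟩, -⟩
  exact hxw (by rw [← h0, ← hl]; rfl)

lemma chainTerm_empty_ge_two (ρ : α → ℕ) (ζ : α → α → ℚ) (x w : α) {k : ℕ} (hk : 2 ≤ k) :
    chainTerm ρ ζ x w ∅ k = 0 := by
  obtain ⟨k', rfl⟩ : ∃ k', k = k' + 2 := ⟨k - 2, by omega⟩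
  refine Finset.sum_eq_zero fun f _ => if_neg ?_
  rintro ⟨-, himg⟩
  have h1 : (1 : Fin (k' + 3)) ∈ Finset.univ.filter
      (fun i : Fin (k' + 3) => i ≠ 0 ∧ i ≠ Fin.last (k' + 2)) := by
    simp only [Finset.mem_filter, Finset.mem_univ, true_and]
    constructor
    · intro h
      exact absurd (congrArg Fin.val h) (by simp)
    · intro h
      have := congrArg Fin.val h
      simp [Fin.last] at this
  have : ρ (f 1) ∈ imgInt ρ f := Finset.mem_image_of_mem _ h1
  rw [himg] at this
  exact Finset.notMem_empty _ this

lemma strictMono_two_iff {f : Fin 2 → α} : StrictMono f ↔ f 0 < f 1 := by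
  rw [Fin.strictMono_iff_lt_succ]
  constructor
  · intro h; exact h 0
  · intro h i
    have : i = 0 := Subsingleton.elim i 0
    subst this
    exact h

lemma chainZeta_two (ζ : α → α → ℚ) (f : Fin 2 → α) : chainZeta ζ f = ζ (f 0) (f 1) := by
  unfold chainZeta
  simp [List.ofFn_succ]

lemma chainTerm_empty_one (hq : IsQuasiGraded ρ ζ) {x w : α} (hxw : ρ x < ρ w) :
    chainTerm ρ ζ x w ∅ 1 = ζ x w := by
  obtain ⟨hρ, hζd, hζ0⟩ := hq
  set f₀ : Fin 2 → α := fun i => if i = 0 then x else w with hf₀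
  have hf0 : f₀ 0 = x := if_pos rfl
  have hf1 : f₀ 1 = w := if_neg (by intro h; exact absurd (congrArg Fin.val h) (by simp))
  rw [chainTerm, Finset.sum_eq_single f₀]
  · rw [imgInt_one]
    by_cases hlt : x < w
    · rw [if_pos ⟨⟨strictMono_two_iff.2 (by rw [hf0, hf1]; exact hlt), hf0, hf1⟩, rfl⟩,
        chainZeta_two, hf0, hf1]
    · rw [if_neg, eq_comm]
      · apply hζ0
        intro hle
        exact hlt (lt_of_le_of_ne hle (fun e => by rw [e] at hxw; omega))
      · rintro ⟨⟨hsm, h0, h1⟩, -⟩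
        exact hlt (by rw [← h0, ← h1]; exact strictMono_two_iff.1 hsm)
  · intro f _ hf
    refine if_neg ?_
    rintro ⟨⟨-, h0, hl⟩, -⟩
    apply hf
    funext i
    fin_cases i
    · show f 0 = f₀ 0
      rw [hf0]; exact h0
    · show f 1 = f₀ 1
      rw [hf1]; exact hl
  · intro h; exact absurd (Finset.mem_univ f₀) h

lemma flagF_empty (hq : IsQuasiGraded ρ ζ) {x w : α} (hxw : ρ x < ρ w) :
    flagF ρ ζ x w ∅ = ζ x w := by
  have hxw' : x ≠ w := fun e => by rw [e] at hxw; omega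
  have hN : 2 ≤ Fintype.card α := Fintype.one_lt_card_iff.2 ⟨x, w, hxw'⟩
  rw [flagF_eq_sum]
  rw [Finset.sum_eq_single_of_mem 1 (Finset.mem_range.2 (by omega))]
  · exact chainTerm_empty_one hq hxw
  · intro k _ hk
    match k, hk with
    | 0, _ => exact chainTerm_empty_zero ρ ζ hxw'
    | (k' + 2), _ => exact chainTerm_empty_ge_two ρ ζ x w (by omega)
    | 1, hk => exact absurd rfl hk

lemma flagF_self (w : α) : flagF ρ ζ w w ∅ = 1 := by
  have hN : 1 ≤ Fintype.card α := Fintype.card_pos_iff.2 ⟨w⟩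
  rw [flagF_eq_sum]
  rw [Finset.sum_eq_single_of_mem 0 (Finset.mem_range.2 (by omega))]
  · rw [chainTerm, Finset.sum_eq_single (fun _ : Fin 1 => w)]
    · rw [if_pos, chainZeta]
      · simp [List.ofFn_zero]
      · refine ⟨⟨fun i j h => absurd (Fin.lt_iff_val_lt_val.1 h) (by omega), rfl, rfl⟩,
          imgInt_zero ρ _⟩
    · intro f _ hf
      refine if_neg ?_
      rintro ⟨⟨-, h0, -⟩, -⟩
      exact hf (funext fun i => by rw [show i = 0 from Fin.ext (by omega)]; exact h0)
    · intro h; exact absurd (Finset.mem_univ _) h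
  · intro k _ hk
    obtain ⟨k', rfl⟩ : ∃ k', k = k' + 1 := ⟨k - 1, by omega⟩
    refine Finset.sum_eq_zero fun f _ => if_neg ?_
    rintro ⟨⟨hsm, h0, hl⟩, -⟩
    have : (0 : Fin (k' + 2)) < Fin.last (k' + 1) := by
      rw [Fin.lt_iff_val_lt_val]; simp
    have := hsm this
    rw [h0, hl] at this
    exact lt_irrefl _ this
end DS4
section DS5
variable {α : Type*} [Fintype α] [PartialOrder α] {ρ : α → ℕ} {ζ : α → α → ℚ}

lemma Icc_split {i k : ℕ} (hik : i < k) :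
    Finset.Icc i k = insert i (insert k (Finset.Ioo i k)) := by
  ext t
  simp only [Finset.mem_Icc, Finset.mem_insert, Finset.mem_Ioo]
  omega

lemma fiber_sum_low (hq : IsQuasiGraded ρ ζ) (x z : α) :
    ∑ y ∈ Finset.univ.filter (fun y => ρ y = ρ x), ζ x y * ζ y z = ζ x z := by
  obtain ⟨hρ, hζd, hζ0⟩ := hq
  have h := Finset.sum_eq_single_of_mem (f := fun y => ζ x y * ζ y z)
    (s := Finset.univ.filter (fun y => ρ y = ρ x)) x
    (Finset.mem_filter.2 ⟨Finset.mem_univ _, rfl⟩) ?_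
  · rw [h]
    show ζ x x * ζ x z = ζ x z
    rw [hζd, one_mul]
  · intro y hy hne
    simp only [Finset.mem_filter, Finset.mem_univ, true_and] at hy
    have hz : ζ x y = 0 := by
      apply hζ0
      intro hle
      have := hρ (lt_of_le_of_ne hle (Ne.symm hne))
      omega
    simp only [hz, zero_mul]

lemma fiber_sum_high (hq : IsQuasiGraded ρ ζ) (x z : α) :
    ∑ y ∈ Finset.univ.filter (fun y => ρ y = ρ z), ζ x y * ζ y z = ζ x z := by
  obtain ⟨hρ, hζd, hζ0⟩ := hq
  have h := Finset.sum_eq_single_of_mem (f := fun y => ζ x y * ζ y z)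
    (s := Finset.univ.filter (fun y => ρ y = ρ z)) z
    (Finset.mem_filter.2 ⟨Finset.mem_univ _, rfl⟩) ?_
  · rw [h]
    show ζ x z * ζ z z = ζ x z
    rw [hζd, mul_one]
  · intro y hy hne
    simp only [Finset.mem_filter, Finset.mem_univ, true_and] at hy
    have hz : ζ y z = 0 := by
      apply hζ0
      intro hle
      have := hρ (lt_of_le_of_ne hle hne)
      omega
    simp only [hz, mul_zero]

lemma bracket (hq : IsQuasiGraded ρ ζ) (hE : IsEulerian ρ ζ) {x z : α} {i k : ℕ}
    (hx : ρ x = i) (hz : ρ z = k) (hik : i < k) :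
    (-1 : ℚ) ^ i * ζ x z +
      ((∑ j ∈ Finset.Ioo i k, (-1 : ℚ) ^ j *
        ∑ y ∈ Finset.univ.filter (fun y => ρ y = j), ζ x y * ζ y z) +
      (-1 : ℚ) ^ k * ζ x z) = 0 := by
  have hq' := hq
  obtain ⟨hρ, hζd, hζ0⟩ := hq'
  have hxz : x ≠ z := fun e => by rw [e, hz] at hx; omega
  set U : ℚ := ∑ y : α, (-1 : ℚ) ^ (ρ y) * (ζ x y * ζ y z) with hU
  have hU0 : U = 0 := by
    have hsub : U = ∑ y ∈ Finset.univ.filter (fun y => x ≤ y ∧ y ≤ z),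
        (-1 : ℚ) ^ (ρ y) * (ζ x y * ζ y z) := by
      refine (Finset.sum_subset (Finset.filter_subset _ _) fun y _ hy => ?_).symm
      simp only [Finset.mem_filter, Finset.mem_univ, true_and, not_and] at hy
      by_cases hxy : x ≤ y
      · rw [hζ0 _ _ (hy hxy), mul_zero, mul_zero]
      · rw [hζ0 _ _ hxy, zero_mul, mul_zero]
    rw [hsub]
    by_cases hxz' : x ≤ z
    · have hE' := hE x z hxz'
      rw [EulerianAt, iaDelta] at hE'
      simp only [if_neg hxz] at hE'
      calc ∑ y ∈ Finset.univ.filter (fun y => x ≤ y ∧ y ≤ z),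
            (-1 : ℚ) ^ (ρ y) * (ζ x y * ζ y z)
          = (-1 : ℚ) ^ i * ∑ y ∈ Finset.univ.filter (fun y => x ≤ y ∧ y ≤ z),
            (-1 : ℚ) ^ (ρ y - ρ x) * ζ x y * ζ y z := by
            rw [Finset.mul_sum]
            refine Finset.sum_congr rfl fun y hy => ?_
            simp only [Finset.mem_filter, Finset.mem_univ, true_and] at hy
            have hle : ρ x ≤ ρ y := by
              rcases eq_or_lt_of_le hy.1 with h | h
              · rw [← h]
              · exact le_of_lt (hρ h)
            have hpow : (-1 : ℚ) ^ (ρ y) = (-1) ^ i * (-1) ^ (ρ y - ρ x) := by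
              rw [← pow_add, ← hx, Nat.add_sub_cancel' hle]
            rw [hpow]
            ring
        _ = 0 := by rw [hE', mul_zero]
    · refine Finset.sum_eq_zero fun y hy => ?_
      simp only [Finset.mem_filter, Finset.mem_univ, true_and] at hy
      exact absurd (le_trans hy.1 hy.2) hxz'
  have hfib : U = ∑ j ∈ Finset.Icc i k, (-1 : ℚ) ^ j *
      ∑ y ∈ Finset.univ.filter (fun y => ρ y = j), ζ x y * ζ y z := by
    have h1 : U = ∑ y ∈ Finset.univ.filter (fun y => ρ y ∈ Finset.Icc i k),
        (-1 : ℚ) ^ (ρ y) * (ζ x y * ζ y z) := by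
      refine (Finset.sum_subset (Finset.filter_subset _ _) fun y _ hy => ?_).symm
      simp only [Finset.mem_filter, Finset.mem_univ, true_and, Finset.mem_Icc] at hy
      by_cases hxy : x ≤ y
      · by_cases hyz : y ≤ z
        · exfalso
          apply hy
          constructor
          · rcases eq_or_lt_of_le hxy with h | h
            · rw [← h]; omega
            · have := hρ h; omega
          · rcases eq_or_lt_of_le hyz with h | h
            · rw [h]; omega
            · have := hρ h; omega
        · rw [hζ0 _ _ hyz, mul_zero, mul_zero]
      · rw [hζ0 _ _ hxy, zero_mul, mul_zero]
    rw [h1, ← Finset.sum_fiberwise_of_maps_to (g := ρ)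
      (fun y hy => (Finset.mem_filter.1 hy).2)]
    refine Finset.sum_congr rfl fun j hj => ?_
    have hset : (Finset.univ.filter (fun y => ρ y ∈ Finset.Icc i k)).filter
        (fun y => ρ y = j) = Finset.univ.filter (fun y => ρ y = j) := by
      ext y
      simp only [Finset.mem_filter, Finset.mem_univ, true_and, Finset.mem_Icc] at hj ⊢
      constructor
      · rintro ⟨-, h⟩; exact h
      · intro h; exact ⟨by omega, h⟩
    rw [hset, Finset.mul_sum]
    refine Finset.sum_congr rfl fun y hy => ?_
    simp only [Finset.mem_filter, Finset.mem_univ, true_and] at hy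
    rw [hy]
  have hfi : ∑ y ∈ Finset.univ.filter (fun y => ρ y = i), ζ x y * ζ y z = ζ x z := by
    rw [← hx]; exact fiber_sum_low hq x z
  have hfk : ∑ y ∈ Finset.univ.filter (fun y => ρ y = k), ζ x y * ζ y z = ζ x z := by
    rw [← hz]; exact fiber_sum_high hq x z
  rw [hfib, Icc_split hik, Finset.sum_insert, Finset.sum_insert] at hU0
  · rw [hfi, hfk] at hU0
    linarith [hU0]
  · simp only [Finset.mem_Ioo]; omega
  · simp only [Finset.mem_insert, Finset.mem_Ioo]; omega
end DS5
section DS6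
variable {α : Type*} [Fintype α] [PartialOrder α] [OrderTop α] {ρ : α → ℕ} {ζ : α → α → ℚ}

lemma fiber_top (hρ : StrictMono ρ) {n : ℕ} (h1 : ρ (⊤ : α) = n + 1) :
    Finset.univ.filter (fun y => ρ y = n + 1) = {(⊤ : α)} := by
  ext y
  simp only [Finset.mem_filter, Finset.mem_univ, true_and, Finset.mem_singleton]
  constructor
  · intro h
    by_contra hne
    have := hρ (lt_of_le_of_ne le_top hne)
    omega
  · rintro rfl; exact h1

lemma tail_split (hq : IsQuasiGraded ρ ζ) {n : ℕ} (h1 : ρ (⊤ : α) = n + 1)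
    (S : Finset ℕ) (k : ℕ) (hcase : (k ∈ S ∧ ∀ t ∈ S, k ≤ t) ∨ (k = n + 1 ∧ S = ∅))
    (hSn : ∀ t ∈ S, t < n + 1) (u : α) (hu : ρ u < k) :
    flagF ρ ζ u ⊤ S = ∑ z ∈ Finset.univ.filter (fun z => ρ z = k),
      ζ u z * flagF ρ ζ z ⊤ (S.erase k) := by
  rcases hcase with ⟨hkS, hmin⟩ | ⟨rfl, rfl⟩
  · exact flagF_peel hq u ⊤ S k hkS hmin hu (by rw [h1]; exact hSn k hkS)
  · rw [fiber_top hq.1 h1, Finset.sum_singleton, Finset.erase_empty, flagF_self, mul_one]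
    exact flagF_empty hq (by rw [h1]; exact hu)

lemma key_base (hq : IsQuasiGraded ρ ζ) (hE : IsEulerian ρ ζ) {n : ℕ}
    (h1 : ρ (⊤ : α) = n + 1) (S : Finset ℕ) (x : α) (k : ℕ)
    (hS : ∀ t ∈ S, ρ x < t ∧ t < n + 1)
    (hk : k ∈ S ∨ k = n + 1) (hik : ρ x < k)
    (hgap : ∀ t ∈ S, t ∉ Finset.Icc (ρ x + 1) (k - 1)) :
    ∑ j ∈ Finset.Icc (ρ x) k, (-1 : ℚ) ^ j *
      flagF ρ ζ x ⊤ ((S ∪ {j}) ∩ Finset.Ioo (ρ x) (n + 1)) = 0 := by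
  set i := ρ x with hi
  have hkn : k ≤ n + 1 := by
    rcases hk with h | h
    · exact le_of_lt (hS k h).2
    · omega
  have hSk : ∀ t ∈ S, k ≤ t := by
    intro t ht
    have h1' := (hS t ht).1
    have h2 := hgap t ht
    simp only [Finset.mem_Icc, not_and, not_le] at h2
    omega
  have hcase : (k ∈ S ∧ ∀ t ∈ S, k ≤ t) ∨ (k = n + 1 ∧ S = ∅) := by
    rcases hk with h | h
    · exact Or.inl ⟨h, hSk⟩
    · refine Or.inr ⟨h, Finset.eq_empty_iff_forall_notMem.2 fun t ht => ?_⟩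
      have := (hS t ht).2
      have := hSk t ht
      omega
  have hSn : ∀ t ∈ S, t < n + 1 := fun t ht => (hS t ht).2
  -- set identities
  have eqi : (S ∪ {i}) ∩ Finset.Ioo i (n + 1) = S := by
    ext t
    simp only [Finset.mem_union, Finset.mem_inter, Finset.mem_singleton, Finset.mem_Ioo]
    constructor
    · rintro ⟨h | h, h2, h3⟩
      · exact h
      · omega
    · intro h
      exact ⟨Or.inl h, (hS t h).1, (hS t h).2⟩
  have eqk : (S ∪ {k}) ∩ Finset.Ioo i (n + 1) = S := by
    ext t
    simp only [Finset.mem_union, Finset.mem_inter, Finset.mem_singleton, Finset.mem_Ioo]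
    constructor
    · rintro ⟨h | h, h2, h3⟩
      · exact h
      · subst h
        rcases hk with h | h
        · exact h
        · omega
    · intro h
      exact ⟨Or.inl h, (hS t h).1, (hS t h).2⟩
  have eqj : ∀ j ∈ Finset.Ioo i k, (S ∪ {j}) ∩ Finset.Ioo i (n + 1) = insert j S := by
    intro j hj
    simp only [Finset.mem_Ioo] at hj
    ext t
    simp only [Finset.mem_union, Finset.mem_inter, Finset.mem_singleton, Finset.mem_Ioo,
      Finset.mem_insert]
    constructor
    · rintro ⟨h | h, h2, h3⟩
      · exact Or.inr h
      · exact Or.inl h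
    · rintro (rfl | h)
      · exact ⟨Or.inr rfl, by omega, by omega⟩
      · exact ⟨Or.inl h, (hS t h).1, (hS t h).2⟩
  -- the common tail factor
  set F' : α → ℚ := fun z => flagF ρ ζ z ⊤ (S.erase k) with hF'
  set fib : Finset α := Finset.univ.filter (fun z => ρ z = k) with hfib
  -- rewrite each term
  have hterm_i : (-1 : ℚ) ^ i * flagF ρ ζ x ⊤ ((S ∪ {i}) ∩ Finset.Ioo i (n + 1)) =
      ∑ z ∈ fib, ((-1 : ℚ) ^ i * ζ x z) * F' z := by
    rw [eqi, tail_split hq h1 S k hcase hSn x hik, Finset.mul_sum]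
    exact Finset.sum_congr rfl fun z _ => by ring
  have hterm_k : (-1 : ℚ) ^ k * flagF ρ ζ x ⊤ ((S ∪ {k}) ∩ Finset.Ioo i (n + 1)) =
      ∑ z ∈ fib, ((-1 : ℚ) ^ k * ζ x z) * F' z := by
    rw [eqk, tail_split hq h1 S k hcase hSn x hik, Finset.mul_sum]
    exact Finset.sum_congr rfl fun z _ => by ring
  have hterm_j : ∀ j ∈ Finset.Ioo i k,
      (-1 : ℚ) ^ j * flagF ρ ζ x ⊤ ((S ∪ {j}) ∩ Finset.Ioo i (n + 1)) =
      ∑ z ∈ fib, ((-1 : ℚ) ^ j *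
        ∑ y ∈ Finset.univ.filter (fun y => ρ y = j), ζ x y * ζ y z) * F' z := by
    intro j hj
    have hj' := Finset.mem_Ioo.1 hj
    have hjS : j ∉ S := fun h => by have := hSk j h; omega
    rw [eqj j hj]
    rw [flagF_peel hq x ⊤ (insert j S) j (Finset.mem_insert_self _ _)
      (fun t ht => by
        rcases Finset.mem_insert.1 ht with rfl | h
        · exact le_refl _
        · exact le_trans (le_of_lt (by omega : j < k)) (hSk t h))
      hj'.1 (by rw [h1]; omega)]
    rw [Finset.erase_insert hjS]
    rw [Finset.sum_congr rfl (fun y hy => by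
      rw [tail_split hq h1 S k hcase hSn y
        (by rw [(Finset.mem_filter.1 hy).2]; exact hj'.2)])]
    -- now: ∑ y ∈ fiber j, ζ x y * ∑ z ∈ fib, ζ y z * F' z
    rw [Finset.mul_sum]
    rw [Finset.sum_congr rfl (fun y _ => by rw [Finset.mul_sum, Finset.mul_sum])]
    rw [Finset.sum_comm]
    refine Finset.sum_congr rfl fun z _ => ?_
    rw [Finset.mul_sum, Finset.sum_mul]
    exact Finset.sum_congr rfl fun y _ => by ring
  -- assemble
  rw [Icc_split hik, Finset.sum_insert (by simp only [Finset.mem_insert, Finset.mem_Ioo]; omega),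
    Finset.sum_insert (by simp only [Finset.mem_Ioo]; omega)]
  rw [hterm_i, hterm_k, Finset.sum_congr rfl hterm_j, Finset.sum_comm]
  rw [← Finset.sum_add_distrib, ← Finset.sum_add_distrib]
  refine Finset.sum_eq_zero fun z hz => ?_
  have hz' : ρ z = k := (Finset.mem_filter.1 hz).2
  have hb := bracket hq hE hi.symm hz' hik
  have hfact : ∀ w : ℚ, ((-1 : ℚ) ^ i * ζ x z) * w +
      (((-1 : ℚ) ^ k * ζ x z) * w +
        (∑ j ∈ Finset.Ioo i k, ((-1 : ℚ) ^ j *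
          ∑ y ∈ Finset.univ.filter (fun y => ρ y = j), ζ x y * ζ y z) * w)) =
      ((-1 : ℚ) ^ i * ζ x z +
        ((∑ j ∈ Finset.Ioo i k, (-1 : ℚ) ^ j *
          ∑ y ∈ Finset.univ.filter (fun y => ρ y = j), ζ x y * ζ y z) +
        (-1 : ℚ) ^ k * ζ x z)) * w := by
    intro w
    rw [add_mul, add_mul, Finset.sum_mul]
    ring
  rw [hfact (F' z), hb, zero_mul]
end DS6
section DS7
variable {α : Type*} [Fintype α] [PartialOrder α] [OrderTop α] {ρ : α → ℕ} {ζ : α → α → ℚ}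

lemma key_ds (hq : IsQuasiGraded ρ ζ) (hE : IsEulerian ρ ζ) {n : ℕ}
    (h1 : ρ (⊤ : α) = n + 1) :
    ∀ (m : ℕ) (S : Finset ℕ), S.card = m → ∀ (x : α) (i k : ℕ),
      (∀ t ∈ S, ρ x < t ∧ t < n + 1) →
      (i ∈ S ∨ i = ρ x) → (k ∈ S ∨ k = n + 1) → i < k →
      (∀ t ∈ S, t ∉ Finset.Icc (i + 1) (k - 1)) →
      ∑ j ∈ Finset.Icc i k, (-1 : ℚ) ^ j *
        flagF ρ ζ x ⊤ ((S ∪ {j}) ∩ Finset.Ioo (ρ x) (n + 1)) = 0 := by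
  intro m
  induction m with
  | zero =>
    intro S hcard x i k hS hi hk hik hgap
    rcases hi with h | rfl
    · rw [Finset.card_eq_zero.1 hcard] at h
      exact absurd h (Finset.notMem_empty i)
    · exact key_base hq hE h1 S x k hS hk hik hgap
  | succ m IH =>
    intro S hcard x i k hS hi hk hik hgap
    rcases hi with hiS | rfl
    swap
    · exact key_base hq hE h1 S x k hS hk hik hgap
    have hSne : S.Nonempty := ⟨i, hiS⟩
    set r := S.min' hSne with hr
    have hrS : r ∈ S := S.min'_mem hSne
    have hmin : ∀ t ∈ S, r ≤ t := fun t ht => S.min'_le t ht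
    have hri : r ≤ i := hmin i hiS
    have hrx : ρ x < r := (hS r hrS).1
    have hrn : r < n + 1 := (hS r hrS).2
    have hpeel : ∀ j ∈ Finset.Icc i k,
        flagF ρ ζ x ⊤ ((S ∪ {j}) ∩ Finset.Ioo (ρ x) (n + 1)) =
        ∑ y ∈ Finset.univ.filter (fun y => ρ y = r),
          ζ x y * flagF ρ ζ y ⊤ (((S ∪ {j}) ∩ Finset.Ioo (ρ x) (n + 1)).erase r) := by
      intro j hj
      refine flagF_peel hq x ⊤ _ r ?_ ?_ hrx (by rw [h1]; omega)
      · exact Finset.mem_inter.2 ⟨Finset.mem_union_left _ hrS, Finset.mem_Ioo.2 ⟨hrx, hrn⟩⟩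
      · intro t ht
        have hj' := Finset.mem_Icc.1 hj
        rcases Finset.mem_union.1 (Finset.mem_inter.1 ht).1 with h | h
        · exact hmin t h
        · rw [Finset.mem_singleton.1 h]; omega
    have herase : ∀ j ∈ Finset.Icc i k,
        ((S ∪ {j}) ∩ Finset.Ioo (ρ x) (n + 1)).erase r =
        (S.erase r ∪ {j}) ∩ Finset.Ioo r (n + 1) := by
      intro j hj
      have hj' := Finset.mem_Icc.1 hj
      ext t
      simp only [Finset.mem_erase, Finset.mem_inter, Finset.mem_union, Finset.mem_singleton,
        Finset.mem_Ioo]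
      constructor
      · rintro ⟨htr, h | h, h2, h3⟩
        · exact ⟨Or.inl ⟨htr, h⟩, lt_of_le_of_ne (hmin t h) (Ne.symm htr), h3⟩
        · subst h
          exact ⟨Or.inr rfl, by omega, h3⟩
      · rintro ⟨⟨htr, h⟩ | h, h2, h3⟩
        · exact ⟨htr, Or.inl h, (hS t h).1, h3⟩
        · subst h
          exact ⟨by omega, Or.inr rfl, by omega, h3⟩
    calc ∑ j ∈ Finset.Icc i k, (-1 : ℚ) ^ j *
          flagF ρ ζ x ⊤ ((S ∪ {j}) ∩ Finset.Ioo (ρ x) (n + 1))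
        = ∑ j ∈ Finset.Icc i k, ∑ y ∈ Finset.univ.filter (fun y => ρ y = r),
            ζ x y * ((-1 : ℚ) ^ j *
              flagF ρ ζ y ⊤ ((S.erase r ∪ {j}) ∩ Finset.Ioo r (n + 1))) := by
          refine Finset.sum_congr rfl fun j hj => ?_
          rw [hpeel j hj, herase j hj, Finset.mul_sum]
          exact Finset.sum_congr rfl fun y _ => by ring
      _ = ∑ y ∈ Finset.univ.filter (fun y => ρ y = r), ζ x y *
            ∑ j ∈ Finset.Icc i k, (-1 : ℚ) ^ j *
              flagF ρ ζ y ⊤ ((S.erase r ∪ {j}) ∩ Finset.Ioo r (n + 1)) := by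
          rw [Finset.sum_comm]
          exact Finset.sum_congr rfl fun y _ => by rw [Finset.mul_sum]
      _ = 0 := by
          refine Finset.sum_eq_zero fun y hy => ?_
          have hy' : ρ y = r := (Finset.mem_filter.1 hy).2
          have hIH := IH (S.erase r)
            (by rw [Finset.card_erase_of_mem hrS, hcard]; omega) y i k
            (fun t ht => by
              have h1t := Finset.mem_erase.1 ht
              have := hmin t h1t.2
              have := (hS t h1t.2).2
              constructor
              · rw [hy']
                omega
              · omega)
            (by
              by_cases hir : i = r
              · exact Or.inr (by rw [hy', hir])
              · exact Or.inl (Finset.mem_erase.2 ⟨hir, hiS⟩))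
            (by
              rcases hk with h | h
              · exact Or.inl (Finset.mem_erase.2 ⟨by omega, h⟩)
              · exact Or.inr h)
            hik
            (fun t ht => hgap t (Finset.mem_erase.1 ht).2)
          rw [hy'] at hIH
          rw [hIH, mul_zero]
end DS7

/-- the generalized Dehn–Sommerville relations for the flag
`f̄`-vector of an Eulerian quasi-graded poset of rank `n+1`.  Intersecting with
`Finset.Icc 1 n` implements the conventions `f̄_{S∪{0}} = f̄_{S∪{n+1}} = f̄_S`. -/
theorem generalized_dehn_sommerville {α : Type*} [Fintype α] [PartialOrder α]
    [BoundedOrder α] (ρ : α → ℕ) (ζ : α → α → ℚ)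
    (hq : IsQuasiGraded ρ ζ) (hE : IsEulerian ρ ζ)
    (n : ℕ) (h0 : ρ (⊥ : α) = 0) (h1 : ρ (⊤ : α) = n + 1)
    (S : Finset ℕ) (hS : S ⊆ Finset.Icc 1 n)
    (i k : ℕ) (hi : i ∈ S ∪ ({0, n + 1} : Finset ℕ)) (hk : k ∈ S ∪ ({0, n + 1} : Finset ℕ))
    (hik : i < k) (hgap : S ∩ Finset.Icc (i + 1) (k - 1) = ∅) :
    ∑ j ∈ Finset.Icc i k,
      (-1 : ℚ) ^ j * flagF ρ ζ (⊥ : α) ⊤ ((S ∪ {j}) ∩ Finset.Icc 1 n) = 0 := by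
  have hS' : ∀ t ∈ S, ρ (⊥ : α) < t ∧ t < n + 1 := by
    intro t ht
    have := Finset.mem_Icc.1 (hS ht)
    rw [h0]
    omega
  have hk' : k ∈ S ∨ k = n + 1 := by
    rcases Finset.mem_union.1 hk with h | h
    · exact Or.inl h
    · simp only [Finset.mem_insert, Finset.mem_singleton] at h
      rcases h with rfl | rfl
      · omega
      · exact Or.inr rfl
  have hkn : k ≤ n + 1 := by
    rcases hk' with h | h
    · have := (hS' k h).2; omega
    · omega
  have hi' : i ∈ S ∨ i = ρ (⊥ : α) := by
    rcases Finset.mem_union.1 hi with h | h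
    · exact Or.inl h
    · simp only [Finset.mem_insert, Finset.mem_singleton] at h
      rcases h with rfl | rfl
      · exact Or.inr h0.symm
      · omega
  have hgap' : ∀ t ∈ S, t ∉ Finset.Icc (i + 1) (k - 1) := by
    intro t ht hmem
    have : t ∈ S ∩ Finset.Icc (i + 1) (k - 1) := Finset.mem_inter.2 ⟨ht, hmem⟩
    rw [hgap] at this
    exact Finset.notMem_empty t this
  have hIcc : Finset.Icc 1 n = Finset.Ioo (ρ (⊥ : α)) (n + 1) := by
    rw [h0]
    ext t
    simp only [Finset.mem_Icc, Finset.mem_Ioo]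
    omega
  rw [hIcc]
  exact key_ds hq hE h1 S.card S rfl ⊥ i k hS' hi' hk' hik hgap'
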